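/- For n-qubit unitaries U and V, letting dist(U,V) = min_{θ ∈ [0,2π)} ‖U − e^{iθ}V‖₂ / √(2N) and D(Φ_U, Φ_V) = ‖J(Φ_U) − J(Φ_V)‖₂ / (N√2), it holds that dist(U,V) ≤ D(Φ_U, Φ_V) ≤ √2 · dist(U,V). -/

import Mathlib

open Matrix

/-- The Choi matrix `J(Φ) = ∑_{a,b} Φ(|a⟩⟨b|) ⊗ |a⟩⟨b|`. -/
noncomputable def choi {I : Type*} [Fintype I] [DecidableEq I]
    (Φ : Matrix I I ℂ → Matrix I I ℂ) : Matrix (I × I) (I × I) ℂ :=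
  Matrix.of fun p q => Φ (Matrix.single p.2 q.2 1) p.1 q.1

/-- The Frobenius norm of a matrix. -/
noncomputable def frob {I J : Type*} [Fintype I] [Fintype J]
    (A : Matrix I J ℂ) : ℝ :=
  Real.sqrt (∑ i, ∑ j, ‖A i j‖ ^ 2)

/-- `dist(U,V) = min_{θ ∈ [0,2π)} ‖U − e^{iθ}V‖₂ / √(2N)`. -/
noncomputable def unitaryDist {I : Type*} [Fintype I] (N : ℝ)
    (U V : Matrix I I ℂ) : ℝ :=
  (Real.sqrt (2 * N))⁻¹ *
    sInf ((fun θ : ℝ => frob (U - Complex.exp (θ * Complex.I) • V)) ''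
      Set.Ico 0 (2 * Real.pi))

/-- `D(Φ,Ψ) = ‖J(Φ) − J(Ψ)‖₂ / (N√2)`. -/
noncomputable def channelDist {I : Type*} [Fintype I] [DecidableEq I] (N : ℝ)
    (Φ Ψ : Matrix I I ℂ → Matrix I I ℂ) : ℝ :=
  (N * Real.sqrt 2)⁻¹ * frob (choi Φ - choi Ψ)

/-! ### Auxiliary lemmas -/

section Aux

set_option linter.unusedSectionVars false

variable {I : Type*} [Fintype I] [DecidableEq I]

lemma sum_normSq_of_unitary (U : Matrix I I ℂ) (hU : Uᴴ * U = 1) :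
    ∑ i, ∑ j, ‖U i j‖ ^ 2 = (Fintype.card I : ℝ) := by
  have h : ∀ j, ∑ i, ‖U i j‖ ^ 2 = 1 := by
    intro j
    have h1 := congrFun (congrFun hU j) j
    simp only [Matrix.mul_apply, Matrix.conjTranspose_apply, Matrix.one_apply_eq] at h1
    have h2 : ((∑ i, ‖U i j‖ ^ 2 : ℝ) : ℂ) = 1 := by
      rw [← h1]
      push_cast
      refine Finset.sum_congr rfl fun i _ => ?_
      rw [mul_comm, show star (U i j) = (starRingEnd ℂ) (U i j) from rfl, Complex.mul_conj]
      norm_cast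
      simp [Complex.normSq_eq_norm_sq]
    exact_mod_cast h2
  rw [Finset.sum_comm, Finset.sum_congr rfl fun j _ => h j]
  simp

lemma sandwich (U : Matrix I I ℂ) (a b c d : I) :
    (U * Matrix.single b d (1:ℂ) * Uᴴ) a c = U a b * (starRingEnd ℂ) (U c d) := by
  simp [Matrix.mul_apply, Matrix.single, Matrix.conjTranspose_apply,
    Finset.sum_ite_eq, Finset.sum_ite_eq', ite_and, mul_comm, mul_assoc]

lemma diag_le_one (W : Matrix I I ℂ) (hW : Wᴴ * W = 1) (j : I) : ‖W j j‖ ≤ 1 := by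
  have h1 := congrFun (congrFun hW j) j
  simp only [Matrix.mul_apply, Matrix.conjTranspose_apply, Matrix.one_apply_eq] at h1
  have h2 : ∑ i, ‖W i j‖ ^ 2 = 1 := by
    have h3 : ((∑ i, ‖W i j‖ ^ 2 : ℝ) : ℂ) = 1 := by
      rw [← h1]
      push_cast
      refine Finset.sum_congr rfl fun i _ => ?_
      rw [mul_comm, show star (W i j) = (starRingEnd ℂ) (W i j) from rfl, Complex.mul_conj]
      norm_cast
      simp [Complex.normSq_eq_norm_sq]
    exact_mod_cast h3
  have h4 : ‖W j j‖ ^ 2 ≤ 1 := by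
    rw [← h2]
    exact Finset.single_le_sum (f := fun i => ‖W i j‖ ^ 2) (fun i _ => by positivity)
      (Finset.mem_univ j)
  nlinarith [norm_nonneg (W j j)]

lemma abs_t_le (U V : Matrix I I ℂ) (hU : Uᴴ * U = 1) (hV : Vᴴ * V = 1) :
    ‖∑ i, ∑ j, (starRingEnd ℂ) (U i j) * V i j‖ ≤ (Fintype.card I : ℝ) := by
  have hUU : U * Uᴴ = 1 := by rwa [mul_eq_one_comm] at hU
  have hW : (Uᴴ * V)ᴴ * (Uᴴ * V) = 1 := by
    rw [Matrix.conjTranspose_mul, Matrix.conjTranspose_conjTranspose]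
    rw [Matrix.mul_assoc, ← Matrix.mul_assoc U, hUU, Matrix.one_mul, hV]
  have ht : (∑ i, ∑ j, (starRingEnd ℂ) (U i j) * V i j) = ∑ j, (Uᴴ * V) j j := by
    rw [Finset.sum_comm]
    refine Finset.sum_congr rfl fun j _ => ?_
    simp [Matrix.mul_apply, Matrix.conjTranspose_apply]
  rw [ht]
  calc ‖∑ j, (Uᴴ * V) j j‖ ≤ ∑ j, ‖(Uᴴ * V) j j‖ := norm_sum_le _ _
  _ ≤ ∑ _j : I, (1:ℝ) := Finset.sum_le_sum fun j _ => diag_le_one _ hW j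
  _ = Fintype.card I := by simp

lemma pt (c a b : ℂ) (hc : ‖c‖ = 1) :
    ‖a - c * b‖ ^ 2 = ‖a‖ ^ 2 + ‖b‖ ^ 2 - 2 * (c * ((starRingEnd ℂ) a * b)).re := by
  have h1 : ∀ z : ℂ, ‖z‖ ^ 2 = Complex.normSq z := by
    intro z; rw [Complex.sq_norm]
  rw [h1, h1, h1, Complex.normSq_sub, Complex.normSq_mul]
  have hc2 : Complex.normSq c = 1 := by rw [← Complex.sq_norm, hc]; norm_num
  rw [hc2, one_mul]
  congr 1
  have : (a * (starRingEnd ℂ) (c * b)).re = (c * ((starRingEnd ℂ) a * b)).re := by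
    rw [← Complex.conj_re (a * (starRingEnd ℂ) (c * b))]
    congr 1
    simp [_root_.map_mul, mul_comm, mul_assoc, mul_left_comm]
  rw [this]

lemma frob_sub (U V : Matrix I I ℂ) (c : ℂ) (hc : ‖c‖ = 1) :
    frob (U - c • V)
      = Real.sqrt ((∑ i, ∑ j, ‖U i j‖^2) + (∑ i, ∑ j, ‖V i j‖^2)
          - 2 * (c * ∑ i, ∑ j, (starRingEnd ℂ) (U i j) * V i j).re) := by
  unfold frob
  congr 1
  have : ∀ i j, ‖(U - c • V) i j‖ ^ 2
      = ‖U i j‖ ^ 2 + ‖V i j‖ ^ 2 - 2 * (c * ((starRingEnd ℂ) (U i j) * V i j)).re := by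
    intro i j
    rw [Matrix.sub_apply, Matrix.smul_apply, smul_eq_mul]
    exact pt c (U i j) (V i j) hc
  simp only [this, Finset.sum_sub_distrib, Finset.sum_add_distrib]
  congr 1
  have h2 : (c * ∑ i, ∑ j, (starRingEnd ℂ) (U i j) * V i j)
      = ∑ i, ∑ j, c * ((starRingEnd ℂ) (U i j) * V i j) := by
    rw [Finset.mul_sum]
    exact Finset.sum_congr rfl fun i _ => Finset.mul_sum _ _ _
  rw [h2, Complex.re_sum, Finset.mul_sum]
  exact Finset.sum_congr rfl fun i _ => by rw [Complex.re_sum, Finset.mul_sum]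

lemma exists_theta (t : ℂ) :
    ∃ θ ∈ Set.Ico (0:ℝ) (2 * Real.pi),
      Complex.exp (θ * Complex.I) * t = (‖t‖ : ℂ) := by
  by_cases ht : t = 0
  · exact ⟨0, ⟨le_refl 0, by positivity⟩, by simp [ht]⟩
  · set φ := Complex.arg ((starRingEnd ℂ) t) with hφ
    have hπ : Real.pi > 0 := Real.pi_pos
    have h1 : -Real.pi < φ := Complex.neg_pi_lt_arg _
    have h2 : φ ≤ Real.pi := Complex.arg_le_pi _
    have hexp : Complex.exp (φ * Complex.I) * t = (‖t‖ : ℂ) := by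
      have h3 := Complex.norm_mul_exp_arg_mul_I ((starRingEnd ℂ) t)
      rw [← hφ] at h3
      have h4 : Complex.exp (φ * Complex.I)
          = (starRingEnd ℂ) t / (‖t‖ : ℂ) := by
        have hne : (‖t‖ : ℂ) ≠ 0 := by
          exact_mod_cast Complex.ofReal_ne_zero.mpr (norm_ne_zero_iff.mpr ht)
        rw [← h3, Complex.norm_conj]
        field_simp
      rw [h4]
      have hne : (‖t‖ : ℂ) ≠ 0 := by
        exact_mod_cast Complex.ofReal_ne_zero.mpr (norm_ne_zero_iff.mpr ht)
      rw [div_mul_eq_mul_div, Complex.conj_mul', sq, mul_div_assoc,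
        div_self hne, mul_one]
    refine ⟨if φ < 0 then φ + 2 * Real.pi else φ, ?_, ?_⟩
    · split_ifs with h
      · constructor <;> [linarith; linarith]
      · constructor <;> [linarith; linarith]
    · split_ifs with h
      · rw [show ((φ + 2 * Real.pi : ℝ) : ℂ) * Complex.I
            = φ * Complex.I + 2 * Real.pi * Complex.I by push_cast; ring]
        rw [Complex.exp_add, Complex.exp_two_pi_mul_I, mul_one]
        exact hexp
      · exact hexp

lemma sInf_eq (U V : Matrix I I ℂ) (N : ℝ)
    (hSU : ∑ i, ∑ j, ‖U i j‖ ^ 2 = N) (hSV : ∑ i, ∑ j, ‖V i j‖ ^ 2 = N) :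
    sInf ((fun θ : ℝ => frob (U - Complex.exp (θ * Complex.I) • V)) ''
        Set.Ico 0 (2 * Real.pi))
      = Real.sqrt (2 * N - 2 * ‖∑ i, ∑ j, (starRingEnd ℂ) (U i j) * V i j‖) := by
  set t := ∑ i, ∑ j, (starRingEnd ℂ) (U i j) * V i j with ht
  have habs : ∀ θ : ℝ, ‖Complex.exp (θ * Complex.I)‖ = 1 := fun θ =>
    Complex.norm_exp_ofReal_mul_I θ
  have hval : ∀ θ : ℝ, frob (U - Complex.exp (θ * Complex.I) • V)
      = Real.sqrt (2 * N - 2 * (Complex.exp (θ * Complex.I) * t).re) := by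
    intro θ
    rw [frob_sub U V _ (habs θ), hSU, hSV, ← ht]
    ring_nf
  apply le_antisymm
  · obtain ⟨θ, hmem, hθ⟩ := exists_theta t
    apply csInf_le
    · exact ⟨0, fun x ⟨θ', _, hx⟩ => hx ▸ Real.sqrt_nonneg _⟩
    · refine ⟨θ, hmem, ?_⟩
      show frob (U - Complex.exp (θ * Complex.I) • V) = _
      rw [hval θ, hθ, Complex.ofReal_re]
  · apply le_csInf
    · exact ⟨_, ⟨0, ⟨le_refl 0, by positivity⟩, rfl⟩⟩
    · rintro x ⟨θ, _, rfl⟩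
      show _ ≤ frob (U - Complex.exp (θ * Complex.I) • V)
      rw [hval θ]
      apply Real.sqrt_le_sqrt
      have : (Complex.exp (θ * Complex.I) * t).re ≤ ‖t‖ := by
        calc (Complex.exp (θ * Complex.I) * t).re
            ≤ ‖Complex.exp (θ * Complex.I) * t‖ := Complex.re_le_norm _
        _ = ‖t‖ := by rw [norm_mul, habs θ, one_mul]
      linarith

lemma pt2 (x y z w : ℂ) :
    ‖x * (starRingEnd ℂ) y - z * (starRingEnd ℂ) w‖ ^ 2
      = ‖x‖^2 * ‖y‖^2 + ‖z‖^2 * ‖w‖^2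
        - 2 * ((x * (starRingEnd ℂ) z) * ((starRingEnd ℂ) y * w)).re := by
  have h1 : ∀ u : ℂ, ‖u‖ ^ 2 = Complex.normSq u := by
    intro u; rw [Complex.sq_norm]
  rw [h1, h1, h1, h1, h1, Complex.normSq_sub, Complex.normSq_mul, Complex.normSq_mul,
    Complex.normSq_conj, Complex.normSq_conj]
  congr 2
  congr 1
  simp only [_root_.map_mul, Complex.conj_conj]
  ring

lemma sum_re_prod {K : Type*} [Fintype K] (A B : K → ℂ) :
    ∑ p, ∑ q, (A p * B q).re = ((∑ p, A p) * (∑ q, B q)).re := by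
  rw [Finset.sum_mul_sum, Complex.re_sum]
  exact Finset.sum_congr rfl fun p _ => (Complex.re_sum _ _).symm

lemma choi_sum (U V : Matrix I I ℂ) (N : ℝ)
    (hSU : ∑ i, ∑ j, ‖U i j‖ ^ 2 = N) (hSV : ∑ i, ∑ j, ‖V i j‖ ^ 2 = N) :
    ∑ p : I × I, ∑ q : I × I,
        ‖(U p.1 p.2 * (starRingEnd ℂ) (U q.1 q.2)
          - V p.1 p.2 * (starRingEnd ℂ) (V q.1 q.2))‖ ^ 2
      = 2 * N ^ 2 - 2 * ‖∑ i, ∑ j, (starRingEnd ℂ) (U i j) * V i j‖ ^ 2 := by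
  set t := ∑ i, ∑ j, (starRingEnd ℂ) (U i j) * V i j with ht
  have hU2 : ∑ p : I × I, ‖U p.1 p.2‖ ^ 2 = N := by
    rw [Fintype.sum_prod_type]; exact hSU
  have hV2 : ∑ p : I × I, ‖V p.1 p.2‖ ^ 2 = N := by
    rw [Fintype.sum_prod_type]; exact hSV
  have hA : ∑ p : I × I, U p.1 p.2 * (starRingEnd ℂ) (V p.1 p.2) = (starRingEnd ℂ) t := by
    rw [ht, map_sum]
    rw [Fintype.sum_prod_type]
    refine Finset.sum_congr rfl fun i _ => ?_
    rw [map_sum]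
    refine Finset.sum_congr rfl fun j _ => ?_
    simp only [_root_.map_mul, Complex.conj_conj]
  have hB : ∑ q : I × I, (starRingEnd ℂ) (U q.1 q.2) * V q.1 q.2 = t := by
    rw [ht, Fintype.sum_prod_type]
  calc ∑ p : I × I, ∑ q : I × I,
        ‖(U p.1 p.2 * (starRingEnd ℂ) (U q.1 q.2)
          - V p.1 p.2 * (starRingEnd ℂ) (V q.1 q.2))‖ ^ 2
      = ∑ p : I × I, ∑ q : I × I,
        (‖U p.1 p.2‖^2 * ‖U q.1 q.2‖^2 + ‖V p.1 p.2‖^2 * ‖V q.1 q.2‖^2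
          - 2 * ((U p.1 p.2 * (starRingEnd ℂ) (V p.1 p.2))
              * ((starRingEnd ℂ) (U q.1 q.2) * V q.1 q.2)).re) := by
        refine Finset.sum_congr rfl fun p _ => Finset.sum_congr rfl fun q _ => ?_
        rw [pt2]
    _ = 2 * N ^ 2 - 2 * ‖t‖ ^ 2 := by
        have S1 : ∑ p : I × I, ∑ q : I × I, ‖U p.1 p.2‖^2 * ‖U q.1 q.2‖^2 = N ^ 2 := by
          rw [← Finset.sum_mul_sum, hU2, sq]
        have S2 : ∑ p : I × I, ∑ q : I × I, ‖V p.1 p.2‖^2 * ‖V q.1 q.2‖^2 = N ^ 2 := by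
          rw [← Finset.sum_mul_sum, hV2, sq]
        have S3 : ∑ p : I × I, ∑ q : I × I,
            2 * ((U p.1 p.2 * (starRingEnd ℂ) (V p.1 p.2))
              * ((starRingEnd ℂ) (U q.1 q.2) * V q.1 q.2)).re = 2 * ‖t‖ ^ 2 := by
          have e : ∑ p : I × I, ∑ q : I × I,
              2 * ((U p.1 p.2 * (starRingEnd ℂ) (V p.1 p.2))
                * ((starRingEnd ℂ) (U q.1 q.2) * V q.1 q.2)).re
              = 2 * ∑ p : I × I, ∑ q : I × I,
                ((U p.1 p.2 * (starRingEnd ℂ) (V p.1 p.2))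
                * ((starRingEnd ℂ) (U q.1 q.2) * V q.1 q.2)).re := by
            rw [Finset.mul_sum]
            exact Finset.sum_congr rfl fun p _ => (Finset.mul_sum _ _ _).symm
          rw [e, sum_re_prod, hA, hB]
          have h5 : ((starRingEnd ℂ) t * t).re = ‖t‖ ^ 2 := by
            rw [mul_comm, Complex.mul_conj]
            norm_cast
            rw [Complex.normSq_eq_norm_sq]
          rw [h5]
        simp only [Finset.sum_sub_distrib, Finset.sum_add_distrib]
        rw [S1, S2, S3]
        ring

end Aux

lemma final_ineq (N s : ℝ) (hN : 0 < N) (hs0 : 0 ≤ s) (hsN : s ≤ N) :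
    (Real.sqrt (2*N))⁻¹ * Real.sqrt (2*N - 2*s)
        ≤ (N * Real.sqrt 2)⁻¹ * Real.sqrt (2*N^2 - 2*s^2) ∧
    (N * Real.sqrt 2)⁻¹ * Real.sqrt (2*N^2 - 2*s^2)
        ≤ Real.sqrt 2 * ((Real.sqrt (2*N))⁻¹ * Real.sqrt (2*N - 2*s)) := by
  have hA : (Real.sqrt (2*N))⁻¹ * Real.sqrt (2*N - 2*s)
      = Real.sqrt ((2*N)⁻¹ * (2*N - 2*s)) := by
    rw [← Real.sqrt_inv, ← Real.sqrt_mul (by positivity : (0:ℝ) ≤ (2*N)⁻¹)]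
  have hNe : N * Real.sqrt 2 = Real.sqrt (2*N^2) := by
    rw [show (2*N^2) = N^2 * 2 by ring, Real.sqrt_mul (by positivity), Real.sqrt_sq hN.le]
  have hB : (N * Real.sqrt 2)⁻¹ * Real.sqrt (2*N^2 - 2*s^2)
      = Real.sqrt ((2*N^2)⁻¹ * (2*N^2 - 2*s^2)) := by
    rw [hNe, ← Real.sqrt_inv, ← Real.sqrt_mul (by positivity : (0:ℝ) ≤ (2*N^2)⁻¹)]
  have hC : Real.sqrt 2 * ((Real.sqrt (2*N))⁻¹ * Real.sqrt (2*N - 2*s))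
      = Real.sqrt (2 * ((2*N)⁻¹ * (2*N - 2*s))) := by
    rw [hA, ← Real.sqrt_mul (by norm_num : (0:ℝ) ≤ 2)]
  rw [hC, hA, hB]
  constructor
  · apply Real.sqrt_le_sqrt
    rw [inv_mul_eq_div, inv_mul_eq_div, div_le_div_iff₀ (by positivity) (by positivity)]
    nlinarith [mul_nonneg (mul_nonneg hN.le hs0) (sub_nonneg.mpr hsN)]
  · apply Real.sqrt_le_sqrt
    rw [inv_mul_eq_div, inv_mul_eq_div, ← mul_div_assoc,
      div_le_div_iff₀ (by positivity) (by positivity)]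
    nlinarith [mul_nonneg hN.le (sq_nonneg (N - s))]

set_option maxHeartbeats 2000000 in
lemma main_aux {I : Type*} [Fintype I] [DecidableEq I]
    (U V : Matrix I I ℂ) (hU : Uᴴ * U = 1) (hV : Vᴴ * V = 1)
    (N : ℝ) (hcard : (Fintype.card I : ℝ) = N) (hNpos : (0:ℝ) < N) :
    unitaryDist N U V ≤
        channelDist N (fun ρ => U * ρ * Uᴴ) (fun ρ => V * ρ * Vᴴ) ∧
    channelDist N (fun ρ => U * ρ * Uᴴ) (fun ρ => V * ρ * Vᴴ) ≤
        Real.sqrt 2 * unitaryDist N U V := by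
  have hSU : ∑ i, ∑ j, ‖U i j‖ ^ 2 = N := by
    rw [sum_normSq_of_unitary U hU, hcard]
  have hSV : ∑ i, ∑ j, ‖V i j‖ ^ 2 = N := by
    rw [sum_normSq_of_unitary V hV, hcard]
  set t := ∑ i, ∑ j, (starRingEnd ℂ) (U i j) * V i j with htdef
  have hsN : ‖t‖ ≤ N := by rw [← hcard]; exact abs_t_le U V hU hV
  have hud : unitaryDist N U V
      = (Real.sqrt (2*N))⁻¹ * Real.sqrt (2*N - 2*‖t‖) := by
    unfold unitaryDist
    rw [sInf_eq U V N hSU hSV]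
  have hcd : channelDist N (fun ρ => U * ρ * Uᴴ) (fun ρ => V * ρ * Vᴴ)
      = (N * Real.sqrt 2)⁻¹ * Real.sqrt (2*N^2 - 2*‖t‖^2) := by
    unfold channelDist frob
    congr 2
    simp only [Matrix.sub_apply, choi, Matrix.of_apply, sandwich]
    exact choi_sum U V N hSU hSV
  rw [hud, hcd]
  exact final_ineq N ‖t‖ hNpos (norm_nonneg t) hsN

theorem stmt_13 {n : ℕ} (U V : Matrix (Fin n → Fin 2) (Fin n → Fin 2) ℂ)
    (hU : Uᴴ * U = 1) (hV : Vᴴ * V = 1) :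
    unitaryDist ((2 : ℝ) ^ n) U V ≤
        channelDist ((2 : ℝ) ^ n) (fun ρ => U * ρ * Uᴴ) (fun ρ => V * ρ * Vᴴ) ∧
    channelDist ((2 : ℝ) ^ n) (fun ρ => U * ρ * Uᴴ) (fun ρ => V * ρ * Vᴴ) ≤
        Real.sqrt 2 * unitaryDist ((2 : ℝ) ^ n) U V :=
  main_aux U V hU hV ((2:ℝ)^n) (by simp) (by positivity)
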